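/- Let ρ ∈ Matrix (Fin d) (Fin d) ℂ be positive definite with trace 1, let A be a measurement with n outcomes on ℂ^d all of whose effects are nonzero, and let λ ∈ [0,1]. Define the noisy measurement A^{(λ)} by A^{(λ)} x = (λ : ℂ) • A x + ((1 − λ) : ℂ) • (Matrix.trace (ρ * A x)) • 1; this is again a measurement with nonzero effects. Then F_ρ(A^{(λ)}) = (λ² : ℂ) • F_ρ(A) + ((1 − λ²) : ℂ) • |ρ^{1/2}⟩⟨ρ^{1/2}|. -/

import Mathlib

open Matrix
open scoped Kronecker ComplexOrder

noncomputable section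

/-- The square root of a positive semidefinite matrix, with its former Mathlib definition. -/
def Matrix.PosSemidef.sqrt {n 𝕜 : Type*} [Fintype n] [RCLike 𝕜] [DecidableEq n]
    {A : Matrix n n 𝕜} (hA : A.PosSemidef) : Matrix n n 𝕜 :=
  hA.1.eigenvectorUnitary.1 * diagonal ((↑) ∘ (√·) ∘ hA.1.eigenvalues) *
    (star hA.1.eigenvectorUnitary : Matrix n n 𝕜)

lemma Matrix.PosSemidef.sqrt_mul_self {n 𝕜 : Type*} [Fintype n] [RCLike 𝕜] [DecidableEq n]
    {A : Matrix n n 𝕜} (hA : A.PosSemidef) : hA.sqrt * hA.sqrt = A := by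
  have hU : (star hA.1.eigenvectorUnitary : Matrix n n 𝕜) * hA.1.eigenvectorUnitary.1 = 1 :=
    Unitary.star_mul_self_of_mem hA.1.eigenvectorUnitary.2
  have hD : diagonal ((↑) ∘ (√·) ∘ hA.1.eigenvalues) * diagonal ((↑) ∘ (√·) ∘ hA.1.eigenvalues)
      = diagonal (((↑) ∘ hA.1.eigenvalues) : n → 𝕜) := by
    rw [diagonal_mul_diagonal]
    congr 1; funext i
    simp only [Function.comp_apply, ← RCLike.ofReal_mul]
    rw [Real.mul_self_sqrt (hA.eigenvalues_nonneg i)]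
  conv_rhs => rw [hA.1.spectral_theorem]
  simp only [Matrix.PosSemidef.sqrt, Unitary.conjStarAlgAut_apply]
  calc _ = hA.1.eigenvectorUnitary.1 * diagonal ((↑) ∘ (√·) ∘ hA.1.eigenvalues) *
        ((star hA.1.eigenvectorUnitary : Matrix n n 𝕜) * hA.1.eigenvectorUnitary.1) *
        diagonal ((↑) ∘ (√·) ∘ hA.1.eigenvalues) * (star hA.1.eigenvectorUnitary : Matrix n n 𝕜) := by
          simp only [Matrix.mul_assoc]
    _ = _ := by rw [hU, Matrix.mul_one, Matrix.mul_assoc _ (diagonal _) (diagonal _), hD]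

lemma Matrix.PosSemidef.sqrt_isHermitian {n 𝕜 : Type*} [Fintype n] [RCLike 𝕜] [DecidableEq n]
    {A : Matrix n n 𝕜} (hA : A.PosSemidef) : hA.sqrt.IsHermitian := by
  simp only [Matrix.PosSemidef.sqrt, IsHermitian, conjTranspose_mul, Matrix.mul_assoc,
    diagonal_conjTranspose]
  simp only [← star_eq_conjTranspose, star_star]
  congr 3
  funext i
  simp

/-- A measurement (POVM): a finite family of positive semidefinite matrices summing to `1`. -/
def IsMeasurement {ι κ : Type*} [Fintype ι] [DecidableEq ι] [Fintype κ]
    (A : κ → Matrix ι ι ℂ) : Prop :=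
  (∀ x, (A x).PosSemidef) ∧ ∑ x, A x = 1

/-- `A` is a post-processing of `B`: `A ⪯ B`. -/
def PostProc {ι : Type*} {n m : ℕ}
    (A : Fin n → Matrix ι ι ℂ) (B : Fin m → Matrix ι ι ℂ) : Prop :=
  ∃ μ : Fin n → Fin m → ℝ,
    (∀ x y, 0 ≤ μ x y) ∧ (∀ y, ∑ x, μ x y = 1) ∧
    (∀ x, A x = ∑ y, (μ x y : ℂ) • B y)

/-- The outer product `|E⟩⟨F|` of the vectorizations of two matrices. -/
def outerProd {ι : Type*} (E F : Matrix ι ι ℂ) : Matrix (ι × ι) (ι × ι) ℂ :=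
  Matrix.of fun p q => E p.1 p.2 * star (F q.1 q.2)

/-- The (un-normalized) Fisher information map of a measurement. -/
noncomputable def Fisher {ι κ : Type*} [Fintype ι] [Fintype κ]
    (A : κ → Matrix ι ι ℂ) : Matrix (ι × ι) (ι × ι) ℂ :=
  ∑ x, (Matrix.trace (A x))⁻¹ • outerProd (A x) (A x)

/-- The generalized Fisher information map of a measurement, relative to a
positive definite state `ρ` (with positive semidefinite square root `ρ^{1/2}`). -/
noncomputable def FisherRho {ι κ : Type*} [Fintype ι] [DecidableEq ι] [Fintype κ]
    {ρ : Matrix ι ι ℂ} (hρ : ρ.PosDef) (A : κ → Matrix ι ι ℂ) :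
    Matrix (ι × ι) (ι × ι) ℂ :=
  ∑ x, (Matrix.trace (ρ * A x))⁻¹ •
    outerProd (hρ.posSemidef.sqrt * A x) (hρ.posSemidef.sqrt * A x)

/-- The height of a finite family of self-adjoint matrices: the infimum of the traces of
Hermitian matrices dominating every member in the Loewner order. -/
noncomputable def height {ι κ : Type*} [Fintype ι] [Fintype κ]
    (X : κ → Matrix ι ι ℂ) : ℝ :=
  sInf { t : ℝ | ∃ H : Matrix ι ι ℂ, H.IsHermitian ∧
    (∀ i, (H - X i).PosSemidef) ∧ t = (Matrix.trace H).re }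

lemma myPsdSmul {ι : Type*} [Fintype ι] {M : Matrix ι ι ℂ} (hM : M.PosSemidef)
    {c : ℂ} (hc : 0 ≤ c) : (c • M).PosSemidef := by
  have hcs : star c = c := by
    rw [Complex.star_def, Complex.conj_eq_iff_im]
    exact (Complex.nonneg_iff.mp hc).2.symm
  refine Matrix.PosSemidef.of_dotProduct_mulVec_nonneg ?_ ?_
  · show (c • M)ᴴ = c • M
    rw [conjTranspose_smul, hcs, hM.1]
  · intro x
    rw [smul_mulVec, dotProduct_smul, smul_eq_mul]
    exact mul_nonneg hc (hM.dotProduct_mulVec_nonneg x)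

lemma myTracePos {ι : Type*} [Fintype ι] [DecidableEq ι] {ρ B : Matrix ι ι ℂ}
    (hρ : ρ.PosDef) (hB : B.PosSemidef) (hB0 : B ≠ 0) : 0 < Matrix.trace (ρ * B) := by
  set C := hB.sqrt with hCdef
  have hC : C * C = B := hB.sqrt_mul_self
  have key : Matrix.trace (ρ * B)
      = ∑ j, dotProduct (star fun i => C i j) (ρ *ᵥ fun i => C i j) := by
    rw [← hC, ← Matrix.mul_assoc, Matrix.trace_mul_cycle, Matrix.trace]
    refine Finset.sum_congr rfl fun j _ => ?_
    simp only [diag_apply, mul_apply, mulVec, dotProduct, Pi.star_apply]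
    simp only [Finset.sum_mul, Finset.mul_sum]
    rw [Finset.sum_comm]
    refine Finset.sum_congr rfl fun i _ => Finset.sum_congr rfl fun k _ => ?_
    have hji : C j i = star (C i j) := (hB.sqrt_isHermitian.apply j i).symm
    rw [hji]; ring
  rw [key]
  have hCne : C ≠ 0 := fun h => hB0 (by rw [← hC, h, Matrix.mul_zero])
  obtain ⟨i, j, hij⟩ : ∃ i j, C i j ≠ 0 := by
    by_contra h
    push_neg at h
    exact hCne (Matrix.ext fun i j => h i j)
  refine Finset.sum_pos' (fun k _ => hρ.posSemidef.dotProduct_mulVec_nonneg _) ⟨j, Finset.mem_univ j, ?_⟩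
  refine hρ.dotProduct_mulVec_pos (x := fun i => C i j) (fun h => hij ?_)
  exact congrFun h i

lemma myOuterExpand {ι : Type*} (a b : ℂ) (E F : Matrix ι ι ℂ) :
    outerProd (a • E + b • F) (a • E + b • F) =
      (a * star a) • outerProd E E + (a * star b) • outerProd E F +
      (b * star a) • outerProd F E + (b * star b) • outerProd F F := by
  ext p q
  simp only [outerProd, Matrix.add_apply, Matrix.smul_apply, Matrix.of_apply, smul_eq_mul,
    star_add, star_mul']
  ring

lemma myOuterSumLeft {ι κ : Type*} [Fintype κ] (E : κ → Matrix ι ι ℂ) (F : Matrix ι ι ℂ) :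
    ∑ x, outerProd (E x) F = outerProd (∑ x, E x) F := by
  ext p q
  simp [outerProd, Matrix.sum_apply, Finset.sum_mul]

lemma myOuterSumRight {ι κ : Type*} [Fintype κ] (E : κ → Matrix ι ι ℂ) (F : Matrix ι ι ℂ) :
    ∑ x, outerProd F (E x) = outerProd F (∑ x, E x) := by
  ext p q
  simp [outerProd, Matrix.sum_apply, Finset.mul_sum]

/-- Effect of noise on the generalized Fisher information matrix. -/
theorem stmt9 {d n : ℕ} {ρ : Matrix (Fin d) (Fin d) ℂ} (hρ : ρ.PosDef)
    (hρtr : Matrix.trace ρ = 1)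
    (A : Fin n → Matrix (Fin d) (Fin d) ℂ) (hA : IsMeasurement A) (hA0 : ∀ x, A x ≠ 0)
    (lam : ℝ) (hl0 : 0 ≤ lam) (hl1 : lam ≤ 1)
    (Alam : Fin n → Matrix (Fin d) (Fin d) ℂ)
    (hAlam : ∀ x, Alam x =
      (lam : ℂ) • A x + ((1 - lam : ℝ) : ℂ) • Matrix.trace (ρ * A x) • 1) :
    IsMeasurement Alam ∧ (∀ x, Alam x ≠ 0) ∧
    FisherRho hρ Alam = ((lam ^ 2 : ℝ) : ℂ) • FisherRho hρ A +
      ((1 - lam ^ 2 : ℝ) : ℂ) • outerProd hρ.posSemidef.sqrt hρ.posSemidef.sqrt := by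
  obtain ⟨hpsd, hsum⟩ := hA
  have htpos : ∀ x, 0 < Matrix.trace (ρ * A x) := fun x => myTracePos hρ (hpsd x) (hA0 x)
  have htne : ∀ x, Matrix.trace (ρ * A x) ≠ 0 := fun x => (htpos x).ne'
  have htstar : ∀ x, star (Matrix.trace (ρ * A x)) = Matrix.trace (ρ * A x) := by
    intro x
    rw [Complex.star_def, Complex.conj_eq_iff_im]
    exact (Complex.nonneg_iff.mp (htpos x).le).2.symm
  have htsum : ∑ x, Matrix.trace (ρ * A x) = 1 := by
    rw [← Matrix.trace_sum, ← Finset.mul_sum, hsum, mul_one, hρtr]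
  have htr : ∀ x, Matrix.trace (ρ * Alam x) = Matrix.trace (ρ * A x) := by
    intro x
    simp only [hAlam x, Matrix.mul_add, Matrix.mul_smul, Matrix.mul_one, Matrix.trace_add,
      Matrix.trace_smul, hρtr, smul_eq_mul, mul_one]
    push_cast
    ring
  have hlc : (0:ℂ) ≤ (lam:ℂ) := by
    rw [Complex.nonneg_iff]; simp [hl0]
  have hmc : (0:ℂ) ≤ ((1 - lam : ℝ):ℂ) := by
    rw [Complex.nonneg_iff]; simp [hl1]
  refine ⟨⟨?_, ?_⟩, ?_, ?_⟩
  · intro x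
    rw [hAlam x]
    refine Matrix.PosSemidef.add (myPsdSmul (hpsd x) hlc) ?_
    rw [smul_smul]
    exact myPsdSmul Matrix.PosSemidef.one (mul_nonneg hmc (htpos x).le)
  · rw [Finset.sum_congr rfl fun x _ => hAlam x, Finset.sum_add_distrib,
      ← Finset.smul_sum, ← Finset.smul_sum, hsum, ← Finset.sum_smul, htsum, one_smul]
    have h1 : (lam:ℂ) + ((1 - lam : ℝ):ℂ) = 1 := by push_cast; ring
    rw [← add_smul, h1, one_smul]
  · intro x h
    exact htne x (by rw [← htr x, h, Matrix.mul_zero, Matrix.trace_zero])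
  · have key : ∀ x, (Matrix.trace (ρ * Alam x))⁻¹ •
        outerProd (hρ.posSemidef.sqrt * Alam x) (hρ.posSemidef.sqrt * Alam x)
        = ((lam:ℂ)^2) • ((Matrix.trace (ρ * A x))⁻¹ •
            outerProd (hρ.posSemidef.sqrt * A x) (hρ.posSemidef.sqrt * A x))
          + ((lam:ℂ) * ((1 - lam : ℝ):ℂ)) •
            outerProd (hρ.posSemidef.sqrt * A x) hρ.posSemidef.sqrt
          + ((lam:ℂ) * ((1 - lam : ℝ):ℂ)) •
            outerProd hρ.posSemidef.sqrt (hρ.posSemidef.sqrt * A x)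
          + (((1 - lam : ℝ):ℂ)^2 * Matrix.trace (ρ * A x)) •
            outerProd hρ.posSemidef.sqrt hρ.posSemidef.sqrt := by
      intro x
      have ht0 : Matrix.trace (ρ * A x) ≠ 0 := htne x
      have hmul : hρ.posSemidef.sqrt * Alam x
          = (lam:ℂ) • (hρ.posSemidef.sqrt * A x)
            + (((1 - lam : ℝ):ℂ) * Matrix.trace (ρ * A x)) • hρ.posSemidef.sqrt := by
        rw [hAlam x, Matrix.mul_add, Matrix.mul_smul, Matrix.mul_smul, Matrix.mul_smul,
          Matrix.mul_one, smul_smul]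
      have hst : star ((lam:ℂ)) = (lam:ℂ) := by
        rw [Complex.star_def, Complex.conj_ofReal]
      have hst2 : star (((1 - lam : ℝ):ℂ) * Matrix.trace (ρ * A x))
          = ((1 - lam : ℝ):ℂ) * Matrix.trace (ρ * A x) := by
        rw [star_mul', htstar x, Complex.star_def, Complex.conj_ofReal]
      rw [htr x, hmul, myOuterExpand, hst, hst2]
      match_scalars <;> field_simp <;> ring
    simp only [FisherRho]
    rw [Finset.sum_congr rfl fun x _ => key x]
    rw [Finset.sum_add_distrib, Finset.sum_add_distrib, Finset.sum_add_distrib,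
      ← Finset.smul_sum, ← Finset.smul_sum, ← Finset.smul_sum,
      myOuterSumLeft, myOuterSumRight, ← Finset.mul_sum, hsum, Matrix.mul_one,
      ← Finset.sum_smul, ← Finset.mul_sum, htsum, mul_one]
    match_scalars <;> push_cast <;> ring
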